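/- There is a constant c > 0 such that for all integers m ≥ 2 and n ≥ max(m,3): the partial functions and_m : S² ⇀ S and or_m : S² ⇀ S, defined exactly on pairs (x,y) with x,y ∈ {0,1} by and_m(x,y) = x ∧ y and or_m(x,y) = x ∨ y, can each be simulated through n-colorings by a graph with at most c·n² vertices and at most c·n³ edges; and the partial function not_m : S ⇀ S, defined exactly on x ∈ {0,1} by not_m(x) = 1 − x, can be simulated through n-colorings by a graph with at most c·n vertices and at most c·n² edges. -/

import Mathlib

/-- A proper `n`-coloring of a simple graph: adjacent vertices get different colors. -/
def IsProperColoring {V : Type} (G : SimpleGraph V) {n : ℕ} (σ : V → Fin n) : Prop :=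
  ∀ ⦃u v : V⦄, G.Adj u v → σ u ≠ σ v

/-- The graph `G`, with input vertices `x`, output vertices `y` and reference vertices `r`,
simulates the partial function `φ : S^p ⇀ S^q` (encoded via `Option`) through `n`-colorings,
where `S = {0,…,m-1}` is identified with the first `m` colors of `C = {0,…,n-1}`. -/
def Simulates {V : Type} (G : SimpleGraph V) (m n : ℕ) {p q : ℕ}
    (φ : (Fin p → Fin m) → Option (Fin q → Fin m))
    (x : Fin p → V) (y : Fin q → V) (r : Fin n → V) : Prop :=
  Function.Injective r ∧
  (∃ σ : V → Fin n, IsProperColoring G σ) ∧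
  (∀ σ : V → Fin n, IsProperColoring G σ → Function.Injective fun i => σ (r i)) ∧
  ∀ a : Fin p → Fin n,
    ((∃ σ : V → Fin n, IsProperColoring G σ ∧ (∀ i, σ (r i) = i) ∧ ∀ j, σ (x j) = a j) ↔
      ∃ a' : Fin p → Fin m, (∀ j, (a j : ℕ) = (a' j : ℕ)) ∧ (φ a').isSome) ∧
    (∀ σ τ : V → Fin n, IsProperColoring G σ → IsProperColoring G τ →
      (∀ i, σ (r i) = i) → (∀ i, τ (r i) = i) →
      (∀ j, σ (x j) = a j) → (∀ j, τ (x j) = a j) → σ = τ) ∧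
    (∀ σ : V → Fin n, IsProperColoring G σ → (∀ i, σ (r i) = i) → (∀ j, σ (x j) = a j) →
      ∀ (a' : Fin p → Fin m) (b : Fin q → Fin m),
        (∀ j, (a j : ℕ) = (a' j : ℕ)) → φ a' = some b →
        ∀ k, (σ (y k) : ℕ) = (b k : ℕ))

section Gadget

variable {n K : ℕ}

def gAdj (n : ℕ) {K : ℕ} (pal : Fin K → List (Fin 3)) (E : Fin K → Fin K → Bool) :
    (Fin n ⊕ Fin K) → (Fin n ⊕ Fin K) → Prop
  | .inl i, .inl j => i ≠ j
  | .inl i, .inr v => ¬ (i : ℕ) ∈ (pal v).map Fin.val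
  | .inr v, .inl i => ¬ (i : ℕ) ∈ (pal v).map Fin.val
  | .inr u, .inr v => E u v = true ∨ E v u = true

def gGraph (n : ℕ) {K : ℕ} (pal : Fin K → List (Fin 3)) (E : Fin K → Fin K → Bool)
    (hE : ∀ v, E v v = false) : SimpleGraph (Fin n ⊕ Fin K) where
  Adj := gAdj n pal E
  symm := by
    constructor
    intro u v h
    cases u <;> cases v <;> simp only [gAdj] at * <;> tauto
  loopless := by
    constructor
    intro u h
    cases u with
    | inl i => exact h rfl
    | inr v =>
      have h' : E v v = true ∨ E v v = true := h
      simp [hE v] at h'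

theorem forced (pal : Fin K → List (Fin 3)) (E : Fin K → Fin K → Bool)
    (hE : ∀ v, E v v = false) (σ : (Fin n ⊕ Fin K) → Fin n)
    (hσ : IsProperColoring (gGraph n pal E hE) σ) (hr : ∀ i, σ (Sum.inl i) = i) :
    ∃ c : Fin K → Fin 3, (∀ v, c v ∈ pal v) ∧ (∀ u v, E u v = true → c u ≠ c v) ∧
      ∀ v, (σ (Sum.inr v) : ℕ) = (c v : ℕ) := by
  have key : ∀ v : Fin K, ((σ (Sum.inr v) : ℕ)) ∈ (pal v).map Fin.val := by
    intro v
    by_contra h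
    have hadj : (gGraph n pal E hE).Adj (Sum.inl (σ (Sum.inr v))) (Sum.inr v) := h
    exact hσ hadj (hr _)
  choose d hd hdv using fun v => List.mem_map.mp (key v)
  refine ⟨d, hd, fun u v he heq => ?_, fun v => (hdv v).symm⟩
  have hadj : (gGraph n pal E hE).Adj (Sum.inr u) (Sum.inr v) := Or.inl he
  apply hσ hadj
  apply Fin.val_injective
  rw [← hdv u, ← hdv v, heq]

theorem proper_canonical (hn3 : 3 ≤ n) (pal : Fin K → List (Fin 3))
    (E : Fin K → Fin K → Bool) (hE : ∀ v, E v v = false) (t : Fin K → Fin 3)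
    (hA : ∀ v, t v ∈ pal v) (hB : ∀ u v, E u v = true → t u ≠ t v) :
    IsProperColoring (gGraph n pal E hE)
      (Sum.elim (fun i => i) (fun v => Fin.castLE hn3 (t v))) := by
  intro u v huv
  cases u with
  | inl i =>
    cases v with
    | inl j =>
      have h : i ≠ j := huv
      simpa using h
    | inr w =>
      have h : ¬ (i : ℕ) ∈ (pal w).map Fin.val := huv
      intro heq
      apply h
      simp only [Sum.elim_inl, Sum.elim_inr] at heq
      have h2 : (i : ℕ) = (t w : ℕ) := by rw [heq]; simp
      rw [h2]
      exact List.mem_map.mpr ⟨t w, hA w, rfl⟩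
  | inr w =>
    cases v with
    | inl j =>
      have h : ¬ (j : ℕ) ∈ (pal w).map Fin.val := huv
      intro heq
      apply h
      simp only [Sum.elim_inl, Sum.elim_inr] at heq
      have h2 : (j : ℕ) = (t w : ℕ) := by rw [← heq]; simp
      rw [h2]
      exact List.mem_map.mpr ⟨t w, hA w, rfl⟩
    | inr w' =>
      have h : E w w' = true ∨ E w' w = true := huv
      simp only [Sum.elim_inr]
      intro heq
      have heq' : t w = t w' := Fin.castLE_injective hn3 heq
      rcases h with h | h
      · exact hB _ _ h heq'
      · exact hB _ _ h heq'.symm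

theorem gadget_simulates {p : ℕ} (m : ℕ) (hm : 2 ≤ m) (hn3 : 3 ≤ n)
    (pal : Fin K → List (Fin 3)) (E : Fin K → Fin K → Bool)
    (hE : ∀ v, E v v = false)
    (tbl : (Fin p → Fin 2) → Fin K → Fin 3)
    (hpK : p < K)
    (φ : (Fin p → Fin m) → Option (Fin 1 → Fin m))
    (Hdom : ∀ a' : Fin p → Fin m, (φ a').isSome ↔ ∀ j, (a' j : ℕ) ≤ 1)
    (Hout : ∀ (bv : Fin p → Fin 2) (a' : Fin p → Fin m) (b : Fin 1 → Fin m),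
      (∀ j, (a' j : ℕ) = (bv j : ℕ)) → φ a' = some b →
      (b 0 : ℕ) = (tbl bv ⟨p, hpK⟩ : ℕ))
    (Hinpal : ∀ v : Fin K, (v : ℕ) < p → ∀ d ∈ pal v, (d : ℕ) ≤ 1)
    (HA : ∀ bv v, tbl bv v ∈ pal v)
    (HB : ∀ bv u v, E u v = true → tbl bv u ≠ tbl bv v)
    (Hin : ∀ (bv : Fin p → Fin 2) (j : Fin p),
      (tbl bv ⟨(j : ℕ), j.isLt.trans hpK⟩ : ℕ) = (bv j : ℕ))
    (Huni : ∀ (bv : Fin p → Fin 2) (c : Fin K → Fin 3),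
      (∀ v, c v ∈ pal v) → (∀ u v, E u v = true → c u ≠ c v) →
      (∀ j : Fin p, (c ⟨(j : ℕ), j.isLt.trans hpK⟩ : ℕ) = (bv j : ℕ)) →
      ∀ v, c v = tbl bv v) :
    Simulates (gGraph n pal E hE) m n φ
      (fun j => Sum.inr ⟨(j : ℕ), j.isLt.trans hpK⟩) (fun _ => Sum.inr ⟨p, hpK⟩)
      Sum.inl := by
  -- canonical coloring
  set G := gGraph n pal E hE with hG
  let can : (Fin p → Fin 2) → (Fin n ⊕ Fin K) → Fin n := fun bv =>
    Sum.elim (fun i => i) (fun v => Fin.castLE hn3 (tbl bv v))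
  have hcan : ∀ bv, IsProperColoring G (can bv) := fun bv =>
    proper_canonical hn3 pal E hE (tbl bv) (HA bv) (fun u v h => HB bv u v h)
  -- determination lemma
  have L : ∀ (σ : (Fin n ⊕ Fin K) → Fin n) (bv : Fin p → Fin 2),
      IsProperColoring G σ → (∀ i, σ (Sum.inl i) = i) →
      (∀ j : Fin p, (σ (Sum.inr ⟨(j : ℕ), j.isLt.trans hpK⟩) : ℕ) = (bv j : ℕ)) →
      σ = can bv := by
    intro σ bv hσ hr hx
    obtain ⟨c, hc1, hc2, hc3⟩ := forced pal E hE σ hσ hr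
    have hcv : ∀ v, c v = tbl bv v := by
      apply Huni bv c hc1 hc2
      intro j
      rw [← hc3 _]
      exact hx j
    funext w
    cases w with
    | inl i => exact hr i
    | inr v =>
      apply Fin.val_injective
      show (σ (Sum.inr v) : ℕ) = ((Fin.castLE hn3 (tbl bv v)) : ℕ)
      rw [hc3 v, hcv v]
      rfl
  -- inputs are ≤ 1 for canonical-ref colorings
  have inputLE : ∀ (σ : (Fin n ⊕ Fin K) → Fin n),
      IsProperColoring G σ → (∀ i, σ (Sum.inl i) = i) →
      ∀ j : Fin p, (σ (Sum.inr ⟨(j : ℕ), j.isLt.trans hpK⟩) : ℕ) ≤ 1 := by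
    intro σ hσ hr j
    obtain ⟨c, hc1, hc2, hc3⟩ := forced pal E hE σ hσ hr
    rw [hc3]
    exact Hinpal _ j.isLt _ (hc1 _)
  refine ⟨Sum.inl_injective, ⟨can (fun _ => 0), hcan _⟩, ?_, ?_⟩
  · intro σ hσ i j hij
    by_contra hne
    exact hσ (show G.Adj (Sum.inl i) (Sum.inl j) from hne) hij
  intro a
  refine ⟨⟨?_, ?_⟩, ?_, ?_⟩
  · rintro ⟨σ, hσ, hr, hx⟩
    have hle : ∀ j, (a j : ℕ) ≤ 1 := by
      intro j
      rw [← hx j]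
      exact inputLE σ hσ hr j
    refine ⟨fun j => ⟨(a j : ℕ), lt_of_le_of_lt (hle j) (by omega)⟩, fun j => rfl, ?_⟩
    rw [Hdom]
    intro j
    exact hle j
  · rintro ⟨a', ha', hsome⟩
    have hle : ∀ j, (a j : ℕ) ≤ 1 := by
      intro j
      rw [ha' j]
      exact (Hdom a').mp hsome j
    refine ⟨can (fun j => ⟨(a j : ℕ), by have := hle j; omega⟩), hcan _, fun i => rfl, ?_⟩
    intro j
    apply Fin.val_injective
    show ((Fin.castLE hn3 (tbl _ _)) : ℕ) = (a j : ℕ)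
    rw [Fin.coe_castLE, Hin]
  · intro σ τ hσ hτ hrσ hrτ hxσ hxτ
    have hle : ∀ j, (a j : ℕ) ≤ 1 := by
      intro j
      rw [← hxσ j]
      exact inputLE σ hσ hrσ j
    set bv : Fin p → Fin 2 := fun j => ⟨(a j : ℕ), by have := hle j; omega⟩ with hbv
    have h1 : σ = can bv := L σ bv hσ hrσ (fun j => by rw [hxσ j])
    have h2 : τ = can bv := L τ bv hτ hrτ (fun j => by rw [hxτ j])
    rw [h1, h2]
  · intro σ hσ hr hx a' b ha' hb k
    have hsome : (φ a').isSome := by rw [hb]; rfl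
    have hle : ∀ j, (a j : ℕ) ≤ 1 := by
      intro j
      rw [ha' j]
      exact (Hdom a').mp hsome j
    set bv : Fin p → Fin 2 := fun j => ⟨(a j : ℕ), by have := hle j; omega⟩ with hbv
    have h1 : σ = can bv := L σ bv hσ hr (fun j => by rw [hx j])
    have hk : k = 0 := Subsingleton.elim k 0
    have hb0 : (b 0 : ℕ) = (tbl bv ⟨p, hpK⟩ : ℕ) := by
      apply Hout bv a' b ?_ hb
      intro j
      rw [← ha' j]
    rw [hk, h1, hb0]
    rfl
def palAND : Fin 6 → List (Fin 3) := ![[0,1],[0,1],[0,1],[0,2],[1,2],[0,1,2]]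
def palOR : Fin 6 → List (Fin 3) := ![[0,1],[0,1],[0,1],[1,2],[0,2],[0,1,2]]
def palNOT : Fin 2 → List (Fin 3) := ![[0,1],[0,1]]

def edgesAND : Fin 6 → Fin 6 → Bool := fun u v =>
  decide ((u,v) ∈ ([(0,3),(0,4),(1,5),(2,4),(2,5),(3,4),(4,5)] : List (Fin 6 × Fin 6)))
def edgesNOT : Fin 2 → Fin 2 → Bool := fun u v => decide ((u, v) = (0, 1))

def tblAND : (Fin 2 → Fin 2) → Fin 6 → Fin 3 := fun bv =>
  if bv 0 = 0 then (if bv 1 = 0 then ![0,0,0,2,1,2] else ![0,1,0,2,1,2])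
  else (if bv 1 = 0 then ![1,0,0,0,2,1] else ![1,1,1,0,2,0])
def tblOR : (Fin 2 → Fin 2) → Fin 6 → Fin 3 := fun bv =>
  if bv 0 = 0 then (if bv 1 = 0 then ![0,0,0,1,2,1] else ![0,1,1,1,2,0])
  else (if bv 1 = 0 then ![1,0,1,2,0,2] else ![1,1,1,2,0,2])
def tblNOT : (Fin 1 → Fin 2) → Fin 2 → Fin 3 := fun bv =>
  if bv 0 = 0 then ![0,1] else ![1,0]

theorem hEAND : ∀ v, edgesAND v v = false := by decide
theorem hENOT : ∀ v, edgesNOT v v = false := by decide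

set_option maxRecDepth 40000

lemma edge_card_le {V : Type} [Fintype V] [DecidableEq V] (G : SimpleGraph V) :
    Nat.card G.edgeSet ≤ (Fintype.card V + 1) * Fintype.card V := by
  have h1 : Nat.card G.edgeSet ≤ Nat.card (Sym2 V) :=
    Nat.card_le_card_of_injective Subtype.val Subtype.val_injective
  refine h1.trans ?_
  rw [Nat.card_eq_fintype_card, Sym2.card, Nat.choose_two_right]
  simp only [Nat.add_sub_cancel]
  exact Nat.div_le_self _ _

lemma tblAND_out : ∀ bv : Fin 2 → Fin 2,
    min ((bv 0 : ℕ)) ((bv 1 : ℕ)) = (tblAND bv 2 : ℕ) := by decide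
lemma tblOR_out : ∀ bv : Fin 2 → Fin 2,
    max ((bv 0 : ℕ)) ((bv 1 : ℕ)) = (tblOR bv 2 : ℕ) := by decide
lemma tblNOT_out : ∀ bv : Fin 1 → Fin 2,
    1 - ((bv 0 : ℕ)) = (tblNOT bv 1 : ℕ) := by decide

/-- There is a constant `c > 0` such that for all `m ≥ 2` and `n ≥ max(m,3)`: the partial
functions `and_m, or_m : S² ⇀ S` (defined exactly on pairs from `{0,1}`, with values
`x ∧ y = min x y` and `x ∨ y = max x y`) can each be simulated through `n`-colorings by a
graph with at most `c·n²` vertices and `c·n³` edges, and `not_m : S ⇀ S` (defined exactly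
on `{0,1}`, with value `1 − x`) by a graph with at most `c·n` vertices and `c·n²` edges. -/
theorem statement7 :
    ∃ c : ℕ, 0 < c ∧
      ∀ m n : ℕ, (hm : 2 ≤ m) → max m 3 ≤ n →
        -- and_m
        (∃ (V : Type) (_ : Fintype V) (G : SimpleGraph V)
            (x : Fin 2 → V) (y : Fin 1 → V) (r : Fin n → V),
          Simulates G m n
            (fun a : Fin 2 → Fin m =>
              if (a 0 : ℕ) ≤ 1 ∧ (a 1 : ℕ) ≤ 1 then
                some fun _ : Fin 1 =>
                  (⟨min (a 0 : ℕ) (a 1 : ℕ),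
                    lt_of_le_of_lt (Nat.min_le_left _ _) (a 0).isLt⟩ : Fin m)
              else none)
            x y r ∧
          Nat.card V ≤ c * n ^ 2 ∧ Nat.card G.edgeSet ≤ c * n ^ 3) ∧
        -- or_m
        (∃ (V : Type) (_ : Fintype V) (G : SimpleGraph V)
            (x : Fin 2 → V) (y : Fin 1 → V) (r : Fin n → V),
          Simulates G m n
            (fun a : Fin 2 → Fin m =>
              if (a 0 : ℕ) ≤ 1 ∧ (a 1 : ℕ) ≤ 1 then
                some fun _ : Fin 1 =>
                  (⟨max (a 0 : ℕ) (a 1 : ℕ), max_lt (a 0).isLt (a 1).isLt⟩ : Fin m)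
              else none)
            x y r ∧
          Nat.card V ≤ c * n ^ 2 ∧ Nat.card G.edgeSet ≤ c * n ^ 3) ∧
        -- not_m
        (∃ (V : Type) (_ : Fintype V) (G : SimpleGraph V)
            (x : Fin 1 → V) (y : Fin 1 → V) (r : Fin n → V),
          Simulates G m n
            (fun a : Fin 1 → Fin m =>
              if (a 0 : ℕ) ≤ 1 then
                some fun _ : Fin 1 => (⟨1 - (a 0 : ℕ), by omega⟩ : Fin m)
              else none)
            x y r ∧
          Nat.card V ≤ c * n ∧ Nat.card G.edgeSet ≤ c * n ^ 2) := by
  refine ⟨100, by norm_num, fun m n hm hn => ?_⟩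
  have hn3 : 3 ≤ n := le_trans (le_max_right m 3) hn
  refine ⟨?_, ?_, ?_⟩
  · -- AND
    refine ⟨Fin n ⊕ Fin 6, inferInstance, gGraph n palAND edgesAND hEAND, _, _, _,
      gadget_simulates m hm hn3 palAND edgesAND hEAND tblAND (by norm_num)
        _ ?_ ?_ (by decide) (by decide) (by decide) (by decide) (by decide), ?_, ?_⟩
    · intro a'
      by_cases h : (a' 0 : ℕ) ≤ 1 ∧ (a' 1 : ℕ) ≤ 1 <;> simp [h, Fin.forall_fin_two]
    · intro bv a' b hj hb
      have h01 : (bv 0 : ℕ) < 2 := (bv 0).isLt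
      have h11 : (bv 1 : ℕ) < 2 := (bv 1).isLt
      have h : (a' 0 : ℕ) ≤ 1 ∧ (a' 1 : ℕ) ≤ 1 := by
        constructor <;> [rw [hj 0]; rw [hj 1]] <;> omega
      rw [if_pos h] at hb
      have hb' : (fun _ : Fin 1 =>
          (⟨min (a' 0 : ℕ) (a' 1 : ℕ),
            lt_of_le_of_lt (Nat.min_le_left _ _) (a' 0).isLt⟩ : Fin m)) = b :=
        Option.some_injective _ hb
      have hb0 : (b 0 : ℕ) = min (a' 0 : ℕ) (a' 1 : ℕ) := by rw [← hb']
      rw [hb0, hj 0, hj 1]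
      exact tblAND_out bv
    · rw [Nat.card_eq_fintype_card, Fintype.card_sum, Fintype.card_fin, Fintype.card_fin]
      calc n + 6 ≤ 100 * n := by omega
        _ ≤ 100 * n ^ 2 := Nat.mul_le_mul_left _ (Nat.le_self_pow (by norm_num) n)
    · refine (edge_card_le _).trans ?_
      rw [Fintype.card_sum, Fintype.card_fin, Fintype.card_fin]
      calc (n + 6 + 1) * (n + 6) ≤ (10 * n) * (10 * n) :=
          Nat.mul_le_mul (by omega) (by omega)
        _ = 100 * n ^ 2 := by ring
        _ ≤ 100 * n ^ 3 := Nat.mul_le_mul_left _ (Nat.pow_le_pow_right (by omega) (by omega))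
  · -- OR
    refine ⟨Fin n ⊕ Fin 6, inferInstance, gGraph n palOR edgesAND hEAND, _, _, _,
      gadget_simulates m hm hn3 palOR edgesAND hEAND tblOR (by norm_num)
        _ ?_ ?_ (by decide) (by decide) (by decide) (by decide) (by decide), ?_, ?_⟩
    · intro a'
      by_cases h : (a' 0 : ℕ) ≤ 1 ∧ (a' 1 : ℕ) ≤ 1 <;> simp [h, Fin.forall_fin_two]
    · intro bv a' b hj hb
      have h01 : (bv 0 : ℕ) < 2 := (bv 0).isLt
      have h11 : (bv 1 : ℕ) < 2 := (bv 1).isLt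
      have h : (a' 0 : ℕ) ≤ 1 ∧ (a' 1 : ℕ) ≤ 1 := by
        constructor <;> [rw [hj 0]; rw [hj 1]] <;> omega
      rw [if_pos h] at hb
      have hb' : (fun _ : Fin 1 =>
          (⟨max (a' 0 : ℕ) (a' 1 : ℕ),
            max_lt (a' 0).isLt (a' 1).isLt⟩ : Fin m)) = b :=
        Option.some_injective _ hb
      have hb0 : (b 0 : ℕ) = max (a' 0 : ℕ) (a' 1 : ℕ) := by rw [← hb']
      rw [hb0, hj 0, hj 1]
      exact tblOR_out bv
    · rw [Nat.card_eq_fintype_card, Fintype.card_sum, Fintype.card_fin, Fintype.card_fin]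
      calc n + 6 ≤ 100 * n := by omega
        _ ≤ 100 * n ^ 2 := Nat.mul_le_mul_left _ (Nat.le_self_pow (by norm_num) n)
    · refine (edge_card_le _).trans ?_
      rw [Fintype.card_sum, Fintype.card_fin, Fintype.card_fin]
      calc (n + 6 + 1) * (n + 6) ≤ (10 * n) * (10 * n) :=
          Nat.mul_le_mul (by omega) (by omega)
        _ = 100 * n ^ 2 := by ring
        _ ≤ 100 * n ^ 3 := Nat.mul_le_mul_left _ (Nat.pow_le_pow_right (by omega) (by omega))
  · -- NOT
    refine ⟨Fin n ⊕ Fin 2, inferInstance, gGraph n palNOT edgesNOT hENOT, _, _, _,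
      gadget_simulates m hm hn3 palNOT edgesNOT hENOT tblNOT (by norm_num)
        _ ?_ ?_ (by decide) (by decide) (by decide) (by decide) (by decide), ?_, ?_⟩
    · intro a'
      by_cases h : (a' 0 : ℕ) ≤ 1 <;> simp [h, Fin.forall_fin_one]
    · intro bv a' b hj hb
      have h01 : (bv 0 : ℕ) < 2 := (bv 0).isLt
      have h : (a' 0 : ℕ) ≤ 1 := by rw [hj 0]; omega
      rw [if_pos h] at hb
      have hb' : (fun _ : Fin 1 => (⟨1 - (a' 0 : ℕ), by omega⟩ : Fin m)) = b :=
        Option.some_injective _ hb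
      have hb0 : (b 0 : ℕ) = 1 - (a' 0 : ℕ) := by rw [← hb']
      rw [hb0, hj 0]
      exact tblNOT_out bv
    · rw [Nat.card_eq_fintype_card, Fintype.card_sum, Fintype.card_fin, Fintype.card_fin]
      omega
    · refine (edge_card_le _).trans ?_
      rw [Fintype.card_sum, Fintype.card_fin, Fintype.card_fin]
      calc (n + 2 + 1) * (n + 2) ≤ (10 * n) * (10 * n) :=
          Nat.mul_le_mul (by omega) (by omega)
        _ = 100 * n ^ 2 := by ring
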